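/- For all i, j ∈ ℤ₊, in Ĥ one has v̂_i · ū_j = v̂_{i,j}. -/
import Mathlib


namespace HatAlgebra

/-- Basis of the algebra `Ĥ`: vectors `â i` for `i : ℤ`, `ŝ_{0̄,j}` for `j` a positive
integer, and `ŝ_{1̄,3k}`, `ŝ_{2̄,3k}` for `k` a positive integer. -/
inductive HatB : Type
  | a : ℤ → HatB
  | s0 : ℕ+ → HatB
  | s1 : ℕ+ → HatB
  | s2 : ℕ+ → HatB
  deriving DecidableEq

variable (F : Type*) [Field F]

/-- The underlying vector space of `Ĥ`: the free `F`-vector space on `HatB`. -/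
abbrev HatH : Type _ := HatB →₀ F

/-- The basis vector `â i`. -/
noncomputable def aHat (i : ℤ) : HatH F := Finsupp.single (HatB.a i) 1

/-- The element `ŝ_{r̄,j}` of `Ĥ`, with the conventions `ŝ_{r̄,0} = 0` and
`ŝ_{1̄,j} = ŝ_{0̄,j} = ŝ_{2̄,j}` whenever `3 ∤ j`. -/
noncomputable def sHat (r : ZMod 3) (j : ℕ) : HatH F :=
  if h : j = 0 then 0
  else if h3 : 3 ∣ j then
    if r = 0 then Finsupp.single (HatB.s0 ⟨j, Nat.pos_of_ne_zero h⟩) 1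
    else if r = 1 then
      Finsupp.single (HatB.s1 ⟨j / 3,
        Nat.div_pos (Nat.le_of_dvd (Nat.pos_of_ne_zero h) h3) (by norm_num)⟩) 1
    else
      Finsupp.single (HatB.s2 ⟨j / 3,
        Nat.div_pos (Nat.le_of_dvd (Nat.pos_of_ne_zero h) h3) (by norm_num)⟩) 1
  else Finsupp.single (HatB.s0 ⟨j, Nat.pos_of_ne_zero h⟩) 1

/-- The operation `∗`: `(−1) ∗ 1̄ = −1`, `(−1) ∗ 2̄ = 1`, `0 ∗ t̄ = 0`. -/
def hatStar (x : ℤ) (t : ZMod 3) : ℤ :=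
  if x = 0 then 0 else if t = 1 then -1 else if t = 2 then 1 else 0

/-- The coefficient `(δ_{ī,r̄} − 1) ∗ (ī − r̄)` appearing in rule (Ĥ2). -/
def hatC (i r : ZMod 3) : ℤ := hatStar ((if i = r then 1 else 0) - 1) (i - r)

/-- Rule (Ĥ2): the product `â_i · ŝ_{r̄,j}`. -/
noncomputable def aMulS (i : ℤ) (r : ZMod 3) (j : ℕ) : HatH F :=
  (-2 : F) • aHat F i + (aHat F (i - (j : ℤ)) + aHat F (i + (j : ℤ))) - sHat F r j
    - (hatC (i : ZMod 3) r : F) • (sHat F (r - 1) j - sHat F (r + 1) j)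

/-- `ŝ_{0̄,n} + ŝ_{1̄,n} + ŝ_{2̄,n}`. -/
noncomputable def sSum (n : ℕ) : HatH F := sHat F 0 n + sHat F 1 n + sHat F 2 n

/-- For `r ≠ t` in `ℤ/3ℤ`, the signed sum `ŝ_{r̄,n} + ŝ_{t̄,n} − ŝ_{m̄,n}` where `m̄`
is the third residue class (appearing in rules (Ĥ5), (Ĥ6), (Ĥ7)). -/
noncomputable def sT (r t : ZMod 3) (n : ℕ) : HatH F :=
  sHat F r n + sHat F t n - sHat F (-(r + t)) n

/-- Rules (Ĥ3)–(Ĥ7): the product `ŝ_{r̄,i} · ŝ_{t̄,j}`. -/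
noncomputable def sMulS (r : ZMod 3) (i : ℕ) (t : ZMod 3) (j : ℕ) : HatH F :=
  if 3 ∣ i ∧ 3 ∣ j then
    if r = t then
      (2 : F) • (sHat F r i + sHat F r j) - (sHat F r (Nat.dist i j) + sHat F r (i + j))
    else
      (2 : F) • (sT F r t i + sT F r t j) - (sT F r t (Nat.dist i j) + sT F r t (i + j))
  else
    (2 : F) • (sHat F r i + sHat F t j) - (2 : F) • (sSum F (Nat.dist i j) + sSum F (i + j))

/-- The product of `Ĥ` on basis vectors, given by rules (Ĥ1)–(Ĥ7) (extended
symmetrically, since the product is commutative). -/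
noncomputable def mulB : HatB → HatB → HatH F
  | .a i, .a j => (-2 : F) • (aHat F i + aHat F j) + sHat F (i : ZMod 3) (i - j).natAbs
  | .a i, .s0 j => aMulS F i 0 (j : ℕ)
  | .s0 j, .a i => aMulS F i 0 (j : ℕ)
  | .a i, .s1 k => aMulS F i 1 (3 * (k : ℕ))
  | .s1 k, .a i => aMulS F i 1 (3 * (k : ℕ))
  | .a i, .s2 k => aMulS F i 2 (3 * (k : ℕ))
  | .s2 k, .a i => aMulS F i 2 (3 * (k : ℕ))
  | .s0 i, .s0 j => sMulS F 0 (i : ℕ) 0 (j : ℕ)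
  | .s0 i, .s1 k => sMulS F 0 (i : ℕ) 1 (3 * (k : ℕ))
  | .s1 k, .s0 i => sMulS F 0 (i : ℕ) 1 (3 * (k : ℕ))
  | .s0 i, .s2 k => sMulS F 0 (i : ℕ) 2 (3 * (k : ℕ))
  | .s2 k, .s0 i => sMulS F 0 (i : ℕ) 2 (3 * (k : ℕ))
  | .s1 h, .s1 k => sMulS F 1 (3 * (h : ℕ)) 1 (3 * (k : ℕ))
  | .s1 h, .s2 k => sMulS F 1 (3 * (h : ℕ)) 2 (3 * (k : ℕ))
  | .s2 k, .s1 h => sMulS F 1 (3 * (h : ℕ)) 2 (3 * (k : ℕ))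
  | .s2 h, .s2 k => sMulS F 2 (3 * (h : ℕ)) 2 (3 * (k : ℕ))

/-- The commutative bilinear product of `Ĥ`, as a bilinear map. -/
noncomputable def hatMul : HatH F →ₗ[F] HatH F →ₗ[F] HatH F :=
  Finsupp.lift (HatH F →ₗ[F] HatH F) F HatB fun x => Finsupp.lift (HatH F) F HatB (mulB F x)

/-- The product of two elements of `Ĥ`. -/
noncomputable def hmul (x y : HatH F) : HatH F := hatMul F x y


/-- `v̂_i := −2â₀ + (â_i + â_{−i}) − ŝ_{0̄,i}`. -/
noncomputable def vHat (i : ℕ) : HatH F :=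
  (-2 : F) • aHat F 0 + (aHat F (i : ℤ) + aHat F (-(i : ℤ))) - sHat F 0 i

/-- `ū_i := −2â₀ + (â_{−i} + â_i) − (ŝ_{0̄,i} + ŝ_{1̄,i} + ŝ_{2̄,i})`. -/
noncomputable def ubar (i : ℕ) : HatH F :=
  (-2 : F) • aHat F 0 + (aHat F (-(i : ℤ)) + aHat F (i : ℤ))
    - (sHat F 0 i + sHat F 1 i + sHat F 2 i)

/-- `v̂_{i,j} := −2v̂_i − 2v̂_j + v̂_{|i−j|} + v̂_{i+j}`. -/
noncomputable def vij (i j : ℕ) : HatH F :=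
  (-2 : F) • vHat F i + (-2 : F) • vHat F j + vHat F (Nat.dist i j) + vHat F (i + j)

section Aux
lemma zmod3_cases (r : ZMod 3) : r = 0 ∨ r = 1 ∨ r = 2 := by revert r; decide

lemma sHat_zero (r : ZMod 3) : sHat F r 0 = 0 := by simp [sHat]

lemma sHat_eq_of_not_dvd (r : ZMod 3) {n : ℕ} (hn : ¬ 3 ∣ n) :
    sHat F r n = sHat F 0 n := by
  have h0 : n ≠ 0 := by rintro rfl; exact hn ⟨0, rfl⟩
  simp [sHat, h0, hn]

lemma hmul_single_single (b c : HatB) :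
    hmul F (Finsupp.single b (1:F)) (Finsupp.single c (1:F)) = mulB F b c := by
  simp [hmul, hatMul]

lemma hmul_add_left (x y z : HatH F) : hmul F (x + y) z = hmul F x z + hmul F y z := by
  simp [hmul]

lemma hmul_add_right (x y z : HatH F) : hmul F x (y + z) = hmul F x y + hmul F x z := by
  simp [hmul]

lemma hmul_sub_left (x y z : HatH F) : hmul F (x - y) z = hmul F x z - hmul F y z := by
  simp [hmul]

lemma hmul_sub_right (x y z : HatH F) : hmul F x (y - z) = hmul F x y - hmul F x z := by
  simp [hmul]

lemma hmul_smul_left (c : F) (x y : HatH F) : hmul F (c • x) y = c • hmul F x y := by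
  simp [hmul]

lemma hmul_smul_right (c : F) (x y : HatH F) : hmul F x (c • y) = c • hmul F x y := by
  simp [hmul]

lemma hmul_aa (x y : ℤ) : hmul F (aHat F x) (aHat F y) =
    (-2 : F) • (aHat F x + aHat F y) + sHat F (x : ZMod 3) (x - y).natAbs := by
  rw [aHat, aHat, hmul_single_single]
  rfl
end Aux
section AuxF
lemma sHat_dvd0' {n : ℕ} (h0 : n ≠ 0) (h3 : ¬ 3 ∣ n) :
    sHat F 0 n = Finsupp.single (HatB.s0 ⟨n, Nat.pos_of_ne_zero h0⟩) (1:F) := by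
  simp [sHat, h0, h3]
end AuxF
section Aux2
lemma aMulS_zero (x : ℤ) (r : ZMod 3) : aMulS F x r 0 = 0 := by
  simp only [aMulS, sHat_zero, Nat.cast_zero, sub_zero, add_zero, smul_zero, sub_self]
  module

lemma aMulS_eq_of_not_dvd (x : ℤ) (r : ZMod 3) {n : ℕ} (hn : ¬ 3 ∣ n) :
    aMulS F x r n = aMulS F x 0 n := by
  simp only [aMulS, sHat_eq_of_not_dvd F _ hn, sub_self, smul_zero, sub_zero]

lemma sHat_dvd0 {n : ℕ} (h0 : n ≠ 0) (h3 : 3 ∣ n) :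
    sHat F 0 n = Finsupp.single (HatB.s0 ⟨n, Nat.pos_of_ne_zero h0⟩) (1:F) := by
  simp [sHat, h0, h3]

lemma sHat_dvd1 {n : ℕ} (h0 : n ≠ 0) (h3 : 3 ∣ n) :
    sHat F 1 n = Finsupp.single (HatB.s1 ⟨n / 3,
      Nat.div_pos (Nat.le_of_dvd (Nat.pos_of_ne_zero h0) h3) (by norm_num)⟩) (1:F) := by
  simp [sHat, h0, h3]

lemma sHat_dvd2 {n : ℕ} (h0 : n ≠ 0) (h3 : 3 ∣ n) :
    sHat F 2 n = Finsupp.single (HatB.s2 ⟨n / 3,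
      Nat.div_pos (Nat.le_of_dvd (Nat.pos_of_ne_zero h0) h3) (by norm_num)⟩) (1:F) := by
  simp [sHat, h0, h3, show (2:ZMod 3) ≠ 0 from by decide, show (2:ZMod 3) ≠ 1 from by decide]

lemma hmul_as (x : ℤ) (r : ZMod 3) (n : ℕ) :
    hmul F (aHat F x) (sHat F r n) = aMulS F x r n := by
  rcases eq_or_ne n 0 with rfl | h0
  · simp [sHat_zero, hmul, aMulS_zero]
  by_cases h3 : 3 ∣ n
  · have hrep : 3 * (n / 3) = n := Nat.mul_div_cancel' h3
    rcases zmod3_cases r with rfl | rfl | rfl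
    · rw [sHat_dvd0 F h0 h3, aHat, hmul_single_single]; rfl
    · rw [sHat_dvd1 F h0 h3, aHat, hmul_single_single]
      show aMulS F x 1 (3 * (n / 3)) = _
      rw [hrep]
    · rw [sHat_dvd2 F h0 h3, aHat, hmul_single_single]
      show aMulS F x 2 (3 * (n / 3)) = _
      rw [hrep]
  · rw [sHat_eq_of_not_dvd F r h3, aMulS_eq_of_not_dvd F x r h3,
      sHat_dvd0' F h0 h3, aHat, hmul_single_single]
    rfl

lemma hmul_sa (x : ℤ) (r : ZMod 3) (n : ℕ) :
    hmul F (sHat F r n) (aHat F x) = aMulS F x r n := by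
  rcases eq_or_ne n 0 with rfl | h0
  · simp [sHat_zero, hmul, aMulS_zero]
  by_cases h3 : 3 ∣ n
  · have hrep : 3 * (n / 3) = n := Nat.mul_div_cancel' h3
    rcases zmod3_cases r with rfl | rfl | rfl
    · rw [sHat_dvd0 F h0 h3, aHat, hmul_single_single]; rfl
    · rw [sHat_dvd1 F h0 h3, aHat, hmul_single_single]
      show aMulS F x 1 (3 * (n / 3)) = _
      rw [hrep]
    · rw [sHat_dvd2 F h0 h3, aHat, hmul_single_single]
      show aMulS F x 2 (3 * (n / 3)) = _
      rw [hrep]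
  · rw [sHat_eq_of_not_dvd F r h3, aMulS_eq_of_not_dvd F x r h3,
      sHat_dvd0' F h0 h3, aHat, hmul_single_single]
    rfl
end Aux2
section Aux3
lemma sT_comm (r t : ZMod 3) (n : ℕ) : sT F r t n = sT F t r n := by
  rw [sT, sT, add_comm (sHat F r n), add_comm r t]

lemma sMulS_comm (r t : ZMod 3) (m n : ℕ) : sMulS F r m t n = sMulS F t n r m := by
  unfold sMulS
  by_cases h : 3 ∣ m ∧ 3 ∣ n
  · rw [if_pos h, if_pos (show 3 ∣ n ∧ 3 ∣ m from ⟨h.2, h.1⟩)]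
    rcases eq_or_ne r t with rfl | hrt
    · rw [if_pos rfl, if_pos rfl, Nat.dist_comm, add_comm (sHat F r m),
        add_comm m n]
    · rw [if_neg hrt, if_neg (Ne.symm hrt), Nat.dist_comm, add_comm (sT F r t m),
        add_comm m n, sT_comm F r t n, sT_comm F r t m, sT_comm F r t (Nat.dist n m),
        sT_comm F r t (n + m)]
  · rw [if_neg h, if_neg (fun hc => h ⟨hc.2, hc.1⟩), Nat.dist_comm, add_comm m n,
      add_comm (sHat F r m)]

lemma sMulS_eq_left (r r' t : ZMod 3) (m n : ℕ) (hm : ¬ 3 ∣ m) :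
    sMulS F r m t n = sMulS F r' m t n := by
  unfold sMulS
  rw [if_neg (fun hc => hm hc.1), if_neg (fun hc => hm hc.1),
    sHat_eq_of_not_dvd F r hm, sHat_eq_of_not_dvd F r' hm]

lemma sMulS_eq_right (r t t' : ZMod 3) (m n : ℕ) (hn : ¬ 3 ∣ n) :
    sMulS F r m t n = sMulS F r m t' n := by
  unfold sMulS
  rw [if_neg (fun hc => hn hc.2), if_neg (fun hc => hn hc.2),
    sHat_eq_of_not_dvd F t hn, sHat_eq_of_not_dvd F t' hn]

lemma hmul_ss (r t : ZMod 3) (m n : ℕ) (hm : m ≠ 0) (hn : n ≠ 0) :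
    hmul F (sHat F r m) (sHat F t n) = sMulS F r m t n := by
  by_cases h3m : 3 ∣ m <;> by_cases h3n : 3 ∣ n
  · have hm3 : 3 * (m / 3) = m := Nat.mul_div_cancel' h3m
    have hn3 : 3 * (n / 3) = n := Nat.mul_div_cancel' h3n
    rcases zmod3_cases r with rfl | rfl | rfl <;> rcases zmod3_cases t with rfl | rfl | rfl
    · rw [sHat_dvd0 F hm h3m, sHat_dvd0 F hn h3n, hmul_single_single]; rfl
    · rw [sHat_dvd0 F hm h3m, sHat_dvd1 F hn h3n, hmul_single_single]
      show sMulS F 0 m 1 (3 * (n / 3)) = _; rw [hn3]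
    · rw [sHat_dvd0 F hm h3m, sHat_dvd2 F hn h3n, hmul_single_single]
      show sMulS F 0 m 2 (3 * (n / 3)) = _; rw [hn3]
    · rw [sHat_dvd1 F hm h3m, sHat_dvd0 F hn h3n, hmul_single_single]
      show sMulS F 0 n 1 (3 * (m / 3)) = _; rw [hm3, sMulS_comm]
    · rw [sHat_dvd1 F hm h3m, sHat_dvd1 F hn h3n, hmul_single_single]
      show sMulS F 1 (3 * (m / 3)) 1 (3 * (n / 3)) = _; rw [hm3, hn3]
    · rw [sHat_dvd1 F hm h3m, sHat_dvd2 F hn h3n, hmul_single_single]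
      show sMulS F 1 (3 * (m / 3)) 2 (3 * (n / 3)) = _; rw [hm3, hn3]
    · rw [sHat_dvd2 F hm h3m, sHat_dvd0 F hn h3n, hmul_single_single]
      show sMulS F 0 n 2 (3 * (m / 3)) = _; rw [hm3, sMulS_comm]
    · rw [sHat_dvd2 F hm h3m, sHat_dvd1 F hn h3n, hmul_single_single]
      show sMulS F 1 (3 * (n / 3)) 2 (3 * (m / 3)) = _; rw [hm3, hn3, sMulS_comm]
    · rw [sHat_dvd2 F hm h3m, sHat_dvd2 F hn h3n, hmul_single_single]
      show sMulS F 2 (3 * (m / 3)) 2 (3 * (n / 3)) = _; rw [hm3, hn3]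
  · have hm3 : 3 * (m / 3) = m := Nat.mul_div_cancel' h3m
    rw [sHat_eq_of_not_dvd F t h3n, sMulS_eq_right F r t 0 m n h3n]
    rcases zmod3_cases r with rfl | rfl | rfl
    · rw [sHat_dvd0 F hm h3m, sHat_dvd0' F hn h3n, hmul_single_single]; rfl
    · rw [sHat_dvd1 F hm h3m, sHat_dvd0' F hn h3n, hmul_single_single]
      show sMulS F 0 n 1 (3 * (m / 3)) = _; rw [hm3, sMulS_comm]
    · rw [sHat_dvd2 F hm h3m, sHat_dvd0' F hn h3n, hmul_single_single]
      show sMulS F 0 n 2 (3 * (m / 3)) = _; rw [hm3, sMulS_comm]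
  · have hn3 : 3 * (n / 3) = n := Nat.mul_div_cancel' h3n
    rw [sHat_eq_of_not_dvd F r h3m, sMulS_eq_left F r 0 t m n h3m]
    rcases zmod3_cases t with rfl | rfl | rfl
    · rw [sHat_dvd0' F hm h3m, sHat_dvd0 F hn h3n, hmul_single_single]; rfl
    · rw [sHat_dvd0' F hm h3m, sHat_dvd1 F hn h3n, hmul_single_single]
      show sMulS F 0 m 1 (3 * (n / 3)) = _; rw [hn3]
    · rw [sHat_dvd0' F hm h3m, sHat_dvd2 F hn h3n, hmul_single_single]
      show sMulS F 0 m 2 (3 * (n / 3)) = _; rw [hn3]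
  · rw [sHat_eq_of_not_dvd F r h3m, sHat_eq_of_not_dvd F t h3n,
      sMulS_eq_left F r 0 t m n h3m, sMulS_eq_right F 0 t 0 m n h3n,
      sHat_dvd0' F hm h3m, sHat_dvd0' F hn h3n, hmul_single_single]
    rfl
end Aux3
section Aux4
lemma dvd3_iff (n : ℕ) : (3:ℕ) ∣ n ↔ (n : ZMod 3) = 0 :=
  (ZMod.natCast_eq_zero_iff n 3).symm

lemma dvd3_dist_iff (i j : ℕ) : (3:ℕ) ∣ Nat.dist i j ↔ (i : ZMod 3) = (j : ZMod 3) := by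
  rw [ZMod.natCast_eq_natCast_iff]
  unfold Nat.ModEq Nat.dist
  omega

lemma nA1 (i j : ℕ) : ((i:ℤ) - (j:ℤ)).natAbs = Nat.dist i j := by unfold Nat.dist; omega
lemma nA2 (i j : ℕ) : ((-(i:ℤ)) - (-(j:ℤ))).natAbs = Nat.dist i j := by unfold Nat.dist; omega
lemma nA3 (i j : ℕ) : ((i:ℤ) - (-(j:ℤ))).natAbs = i + j := by omega
lemma nA4 (i j : ℕ) : ((-(i:ℤ)) - (j:ℤ)).natAbs = i + j := by omega

lemma hatC00 : hatC 0 0 = 0 := by decide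
lemma hatC01 : hatC 0 1 = 1 := by decide
lemma hatC02 : hatC 0 2 = -1 := by decide
lemma hatC10 : hatC 1 0 = -1 := by decide
lemma hatC11 : hatC 1 1 = 0 := by decide
lemma hatC12 : hatC 1 2 = 1 := by decide
lemma hatC20 : hatC 2 0 = 1 := by decide
lemma hatC21 : hatC 2 1 = -1 := by decide
lemma hatC22 : hatC 2 2 = 0 := by decide

lemma zm1 : (-1 : ZMod 3) = 2 := by decide
lemma zm2 : (-2 : ZMod 3) = 1 := by decide
lemma zm0 : (-0 : ZMod 3) = 0 := by decide
lemma zp11 : (1 + 1 : ZMod 3) = 2 := by decide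
lemma zp21 : (2 + 1 : ZMod 3) = 0 := by decide
lemma zs21 : (2 - 1 : ZMod 3) = 1 := by decide
lemma zq1 : ((0 : ZMod 3) = 1) = False := by decide
lemma zq2 : ((0 : ZMod 3) = 2) = False := by decide
end Aux4


set_option maxHeartbeats 2000000
set_option linter.unreachableTactic false
set_option linter.unusedTactic false

/-- For all `i, j ∈ ℤ₊`, `v̂_i · ū_j = v̂_{i,j}`. -/
theorem vHat_mul_ubar [CharP F 5] (i j : ℕ) (hi : 0 < i) (hj : 0 < j) :
    hmul F (vHat F i) (ubar F j) = vij F i j := by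
  have h5 : (5:F) = 0 := CharP.cast_eq_zero F 5
  have hi0 : i ≠ 0 := hi.ne'
  have hj0 : j ≠ 0 := hj.ne'
  have hss : ∀ t : ZMod 3, hmul F (sHat F 0 i) (sHat F t j) = sMulS F 0 i t j :=
    fun t => hmul_ss F 0 t i j hi0 hj0
  rw [vHat, ubar, vij, vHat, vHat, vHat, vHat]
  simp only [hmul_add_left, hmul_add_right, hmul_sub_left, hmul_sub_right,
    hmul_smul_left, hmul_smul_right, hmul_aa, hmul_as, hmul_sa, hss]
  simp only [aMulS, sMulS, sSum, sT, nA1, nA2, nA3, nA4,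
    sub_self, Int.natAbs_zero, Int.natAbs_neg, Int.natAbs_natCast, neg_neg, sHat_zero,
    Int.cast_natCast, Int.cast_neg, Int.cast_zero,
    zero_sub, zero_add, sub_zero, add_zero, Nat.cast_add]
  -- normalize aHat integer arguments (case split on order of i, j for Nat.dist)
  rw [show (-(j:ℤ) + (i:ℤ)) = (i:ℤ) - (j:ℤ) from by ring,
      show (-(j:ℤ) - (i:ℤ)) = -(i:ℤ) - (j:ℤ) from by ring,
      show ((j:ℤ) + (i:ℤ)) = (i:ℤ) + (j:ℤ) from by ring,
      show (-(i:ℤ) + (j:ℤ)) = (j:ℤ) - (i:ℤ) from by ring,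
      show (-((i:ℤ) + (j:ℤ))) = -(i:ℤ) - (j:ℤ) from by ring]
  rcases le_total i j with hle | hle <;>
  [ rw [show ((Nat.dist i j : ℤ)) = (j:ℤ) - (i:ℤ) from by unfold Nat.dist; omega,
        show (-((j:ℤ) - (i:ℤ))) = (i:ℤ) - (j:ℤ) from by ring];
    rw [show ((Nat.dist i j : ℤ)) = (i:ℤ) - (j:ℤ) from by unfold Nat.dist; omega,
        show (-((i:ℤ) - (j:ℤ))) = (j:ℤ) - (i:ℤ) from by ring]] <;>
  clear hle <;>
  rcases zmod3_cases ((i:ℕ) : ZMod 3) with hi3 | hi3 | hi3 <;>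
  rcases zmod3_cases ((j:ℕ) : ZMod 3) with hj3 | hj3 | hj3 <;>
  have hsum : ((i + j : ℕ) : ZMod 3) = (i:ZMod 3) + (j:ZMod 3) := by push_cast; ring
  all_goals (
    first
      | have h3i : (3:ℕ) ∣ i := (dvd3_iff i).mpr hi3
      | have h3i : ¬ (3:ℕ) ∣ i := fun h => by
          rw [(dvd3_iff i).mp h] at hi3; exact absurd hi3 (by decide))
  all_goals (
    first
      | have h3j : (3:ℕ) ∣ j := (dvd3_iff j).mpr hj3
      | have h3j : ¬ (3:ℕ) ∣ j := fun h => by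
          rw [(dvd3_iff j).mp h] at hj3; exact absurd hj3 (by decide))
  all_goals (
    first
      | have h3d : (3:ℕ) ∣ Nat.dist i j := (dvd3_dist_iff i j).mpr (hi3.trans hj3.symm)
      | have h3d : ¬ (3:ℕ) ∣ Nat.dist i j := fun h => by
          rw [(dvd3_dist_iff i j).mp h, hj3] at hi3; exact absurd hi3 (by decide))
  all_goals (
    first
      | have h3p : (3:ℕ) ∣ (i + j) := (dvd3_iff _).mpr (by rw [hsum, hi3, hj3]; decide)
      | have h3p : ¬ (3:ℕ) ∣ (i + j) := fun h => by
          rw [dvd3_iff, hsum, hi3, hj3] at h; exact absurd h (by decide))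
  all_goals rw [hi3, hj3]
  all_goals (
    simp only [hatC00, hatC01, hatC02, hatC10, hatC11, hatC12, hatC20, hatC21, hatC22,
      zm1, zm2, zp11, zp21, zs21, zq1, zq2, neg_zero,
      Int.cast_zero, Int.cast_one, Int.cast_neg, zero_smul, one_smul, neg_smul, sub_zero,
      h3i, h3j, h3d, h3p, and_true, true_and, and_false, false_and, if_true, if_false,
      eq_self_iff_true, not_true, not_false_iff,
      sHat_eq_of_not_dvd])
  all_goals (match_scalars <;>
    first
      | ring1
      | linear_combination h5
      | linear_combination 2*h5
      | linear_combination 3*h5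
      | linear_combination 4*h5
      | linear_combination 5*h5
      | linear_combination 6*h5
      | linear_combination -h5
      | linear_combination -2*h5
      | linear_combination -3*h5
      | linear_combination -4*h5
      | linear_combination -5*h5
      | linear_combination -6*h5)


end HatAlgebra
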